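/- With the hypotheses of the consensus iteration x_s = (G ⊗ I_m) x_{s−1} + δ_s w_s (G = I_N − (1/κ)L, graph connected, κ > λ_N/2, δ_s ∈ (0,1), δ_s → 0, (w_s) bounded), for every ε > 0 there exists S such that for all s > S and all pairs of agents i, j, the block components satisfy ‖x_{i,s} − x_{j,s}‖ < ε. -/

import Mathlib

open Matrix Finset
open scoped Kronecker

/-- `L` is the Laplacian of the undirected weighted graph with adjacency matrix `A`. -/
def IsLaplacianOf {N : ℕ} (L A : Matrix (Fin N) (Fin N) ℝ) : Prop :=
  A.IsSymm ∧ (∀ i j, 0 ≤ A i j) ∧ (∀ i, A i i = 0) ∧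
    L = Matrix.diagonal (fun i => ∑ j, A i j) - A

/-- Connectedness of the weighted graph given by adjacency matrix `A`. -/
def GraphConnected {N : ℕ} (A : Matrix (Fin N) (Fin N) ℝ) : Prop :=
  ∀ i j : Fin N, Relation.ReflTransGen (fun a b => 0 < A a b) i j

lemma lap_quad {N : ℕ} (L A : Matrix (Fin N) (Fin N) ℝ) (hL : IsLaplacianOf L A)
    (v : Fin N → ℝ) :
    2 * (v ⬝ᵥ (L *ᵥ v)) = ∑ i, ∑ j, A i j * (v i - v j)^2 := by
  obtain ⟨hsymm, hnn, hdiag, hLdef⟩ := hL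
  subst hLdef
  have hS : ∑ i, ∑ j, A i j * v j ^ 2 = ∑ i, ∑ j, A i j * v i ^ 2 := by
    rw [Finset.sum_comm]
    exact Finset.sum_congr rfl fun i _ => Finset.sum_congr rfl fun j _ => by
      rw [hsymm.apply]
  have expand : ∑ i, ∑ j, A i j * (v i - v j)^2
      = (∑ i, ∑ j, A i j * v i ^ 2) + (∑ i, ∑ j, A i j * v j ^ 2)
        - 2 * ∑ i, ∑ j, A i j * (v i * v j) := by
    simp only [Finset.mul_sum, ← Finset.sum_add_distrib, ← Finset.sum_sub_distrib]
    exact Finset.sum_congr rfl fun i _ => Finset.sum_congr rfl fun j _ => by ring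
  have h1 : v ⬝ᵥ ((Matrix.diagonal (fun i => ∑ j, A i j)) *ᵥ v)
      = ∑ i, ∑ j, A i j * v i ^ 2 := by
    simp only [dotProduct, Matrix.mulVec_diagonal]
    exact Finset.sum_congr rfl fun i _ => by
      rw [Finset.sum_mul, Finset.mul_sum]
      exact Finset.sum_congr rfl fun j _ => by ring
  have h2 : v ⬝ᵥ (A *ᵥ v) = ∑ i, ∑ j, A i j * (v i * v j) := by
    simp only [dotProduct, Matrix.mulVec, Finset.mul_sum]
    exact Finset.sum_congr rfl fun i _ => Finset.sum_congr rfl fun j _ => by ring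
  rw [Matrix.sub_mulVec, dotProduct_sub, h1, h2, expand, hS]
  ring

lemma lap_psd {N : ℕ} (L A : Matrix (Fin N) (Fin N) ℝ) (hL : IsLaplacianOf L A)
    (v : Fin N → ℝ) : 0 ≤ v ⬝ᵥ (L *ᵥ v) := by
  have h := lap_quad L A hL v
  have : 0 ≤ ∑ i, ∑ j, A i j * (v i - v j)^2 :=
    Finset.sum_nonneg fun i _ => Finset.sum_nonneg fun j _ =>
      mul_nonneg (hL.2.1 i j) (sq_nonneg _)
  linarith

lemma lap_ker_const {N : ℕ} (L A : Matrix (Fin N) (Fin N) ℝ) (hL : IsLaplacianOf L A)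
    (hconn : ∀ i j : Fin N, Relation.ReflTransGen (fun a b => 0 < A a b) i j)
    (v : Fin N → ℝ) (hv : L *ᵥ v = 0) : ∀ i j, v i = v j := by
  have hq := lap_quad L A hL v
  rw [hv] at hq
  simp only [dotProduct_zero, mul_zero] at hq
  have hnn : ∀ i ∈ Finset.univ, (0:ℝ) ≤ ∑ j, A i j * (v i - v j)^2 :=
    fun i _ => Finset.sum_nonneg fun j _ => mul_nonneg (hL.2.1 i j) (sq_nonneg _)
  have h1 := (Finset.sum_eq_zero_iff_of_nonneg hnn).mp hq.symm
  have h2 : ∀ i j : Fin N, A i j * (v i - v j)^2 = 0 := by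
    intro i j
    have := (Finset.sum_eq_zero_iff_of_nonneg
      (fun j _ => mul_nonneg (hL.2.1 i j) (sq_nonneg _))).mp (h1 i (Finset.mem_univ i))
    exact this j (Finset.mem_univ j)
  have hr : ∀ i j : Fin N, 0 < A i j → v i = v j := by
    intro i j hij
    have := h2 i j
    have h3 : (v i - v j)^2 = 0 := by
      rcases mul_eq_zero.mp this with h | h
      · exact absurd h hij.ne'
      · exact h
    have := pow_eq_zero_iff (n := 2) (by norm_num) |>.mp h3
    linarith
  intro i j
  induction hconn i j with
  | refl => rfl
  | tail _ hbc ih => exact ih.trans (hr _ _ hbc)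

lemma lap_row_sum {N : ℕ} (L A : Matrix (Fin N) (Fin N) ℝ) (hL : IsLaplacianOf L A)
    (i : Fin N) : ∑ j, L i j = 0 := by
  obtain ⟨hsymm, -, -, hLdef⟩ := hL
  subst hLdef
  simp only [Matrix.sub_apply, Matrix.diagonal_apply, Finset.sum_sub_distrib]
  rw [Finset.sum_ite_eq Finset.univ i (fun _ => ∑ j, A i j)]
  simp

lemma lap_symm {N : ℕ} (L A : Matrix (Fin N) (Fin N) ℝ) (hL : IsLaplacianOf L A) :
    L.IsSymm := by
  obtain ⟨hsymm, -, -, hLdef⟩ := hL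
  subst hLdef
  exact (Matrix.isSymm_diagonal _).sub hsymm

lemma lap_col_sum {N : ℕ} (L A : Matrix (Fin N) (Fin N) ℝ) (hL : IsLaplacianOf L A)
    (j : Fin N) : ∑ i, L i j = 0 := by
  have := lap_row_sum L A hL j
  rw [← this]
  exact Finset.sum_congr rfl fun i _ => (lap_symm L A hL).apply j i ▸ rfl

lemma eig_bound {N : ℕ} (hN : 0 < N) (L A : Matrix (Fin N) (Fin N) ℝ)
    (hL : IsLaplacianOf L A)
    (hconn : ∀ i j : Fin N, Relation.ReflTransGen (fun a b => 0 < A a b) i j)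
    (lamN : ℝ) (hlamN : Module.End.HasEigenvalue (Matrix.toLin' L) lamN)
    (hmax : ∀ μ : ℝ, Module.End.HasEigenvalue (Matrix.toLin' L) μ → μ ≤ lamN)
    (κ : ℝ) (hκ : lamN / 2 < κ)
    (G : Matrix (Fin N) (Fin N) ℝ) (hG : G = 1 - κ⁻¹ • L)
    (μ : ℝ) (v : Fin N → ℝ) (hv : v ≠ 0) (hsum : ∑ i, v i = 0)
    (hμ : G *ᵥ v = μ • v) : |μ| < 1 := by
  -- lamN ≥ 0, hence κ > 0
  have hlamN0 : 0 ≤ lamN := by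
    obtain ⟨u, hu⟩ := hlamN.exists_hasEigenvector
    have hu0 : u ≠ 0 := hu.right
    have huL : L *ᵥ u = lamN • u := by
      have := Module.End.mem_eigenspace_iff.mp hu.left
      rwa [Matrix.toLin'_apply] at this
    have hpsd := lap_psd L A hL u
    rw [huL, dotProduct_smul] at hpsd
    have hnn : (0:ℝ) ≤ u ⬝ᵥ u := Finset.sum_nonneg fun i _ => mul_self_nonneg _
    have hpos : 0 < u ⬝ᵥ u := by
      rcases lt_or_eq_of_le hnn with h | h
      · exact h
      · exact absurd (dotProduct_self_eq_zero.mp h.symm) hu0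
    rw [smul_eq_mul] at hpsd
    nlinarith
  have hκ0 : 0 < κ := by linarith
  -- v is an eigenvector of L with eigenvalue lam = κ * (1 - μ)
  set lam := κ * (1 - μ) with hlam
  have hLv : L *ᵥ v = lam • v := by
    rw [hG, Matrix.sub_mulVec, Matrix.one_mulVec, Matrix.smul_mulVec] at hμ
    have : κ⁻¹ • (L *ᵥ v) = v - μ • v := by
      rw [← hμ]; abel
    have h2 := congrArg (fun z => κ • z) this
    simp only [smul_smul, mul_inv_cancel₀ hκ0.ne', one_smul] at h2
    rw [h2, smul_sub, smul_smul, hlam]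
    ext i; simp; ring
  have heig : Module.End.HasEigenvalue (Matrix.toLin' L) lam := by
    apply Module.End.hasEigenvalue_of_hasEigenvector (x := v)
    refine ⟨Module.End.mem_eigenspace_iff.mpr ?_, hv⟩
    rw [Matrix.toLin'_apply]; exact hLv
  have hle : lam ≤ lamN := hmax lam heig
  have hpos : 0 < v ⬝ᵥ v := by
    have hnn : (0:ℝ) ≤ v ⬝ᵥ v := Finset.sum_nonneg fun i _ => mul_self_nonneg _
    rcases lt_or_eq_of_le hnn with h | h
    · exact h
    · exact absurd (dotProduct_self_eq_zero.mp h.symm) hv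
  have hlam0 : 0 ≤ lam := by
    have hpsd := lap_psd L A hL v
    rw [hLv, dotProduct_smul, smul_eq_mul] at hpsd
    nlinarith
  have hlamne : lam ≠ 0 := by
    intro h0
    have hker : L *ᵥ v = 0 := by rw [hLv, h0, zero_smul]
    have hconst := lap_ker_const L A hL hconn v hker
    apply hv
    ext i
    have hsum2 : ∑ j, v j = (N : ℝ) * v i := by
      rw [Finset.sum_congr rfl fun j _ => hconst j i]
      simp [Finset.card_univ, mul_comm]
    have : (N : ℝ) * v i = 0 := by rw [← hsum2, hsum]
    have hNne : (N : ℝ) ≠ 0 := (Nat.cast_pos.mpr hN).ne'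
    exact (mul_eq_zero.mp this).resolve_left hNne
  have hlampos : 0 < lam := lt_of_le_of_ne hlam0 (Ne.symm hlamne)
  rw [abs_lt]
  constructor <;> nlinarith

noncomputable def sumFun (N : ℕ) : EuclideanSpace ℝ (Fin N) →ₗ[ℝ] ℝ where
  toFun v := ∑ i, v i
  map_add' u v := by simp [PiLp.add_apply, Finset.sum_add_distrib]
  map_smul' c v := by simp [PiLp.smul_apply, Finset.mul_sum]

lemma contract {N : ℕ} (G : Matrix (Fin N) (Fin N) ℝ) (hGs : G.IsSymm)
    (hGW : ∀ v : Fin N → ℝ, ∑ i, v i = 0 → ∑ i, (G *ᵥ v) i = 0)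
    (heig : ∀ (μ : ℝ) (v : Fin N → ℝ), v ≠ 0 → ∑ i, v i = 0 → G *ᵥ v = μ • v → |μ| < 1) :
    ∃ ρ : ℝ, 0 ≤ ρ ∧ ρ < 1 ∧ ∀ v : EuclideanSpace ℝ (Fin N), ∑ i, v i = 0 →
      ‖(Matrix.toEuclideanLin G) v‖ ≤ ρ * ‖v‖ := by
  classical
  set g : EuclideanSpace ℝ (Fin N) →ₗ[ℝ] EuclideanSpace ℝ (Fin N) :=
    Matrix.toEuclideanLin G with hg
  have hgv : ∀ (v : EuclideanSpace ℝ (Fin N)) (i : Fin N),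
      (g v) i = (G *ᵥ (fun j => v j)) i := by
    intro v i
    rw [hg, Matrix.toEuclideanLin_apply]
  set W : Submodule ℝ (EuclideanSpace ℝ (Fin N)) := LinearMap.ker (sumFun N) with hW
  have memW : ∀ v : EuclideanSpace ℝ (Fin N), v ∈ W ↔ ∑ i, v i = 0 := by
    intro v; rw [hW, LinearMap.mem_ker]; rfl
  have hWinv : ∀ v ∈ W, g v ∈ W := by
    intro v hv
    rw [memW] at hv ⊢
    rw [Finset.sum_congr rfl fun i _ => hgv v i]
    exact hGW _ hv
  set T : W →ₗ[ℝ] W := g.restrict hWinv with hT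
  have hginner : ∀ a b : EuclideanSpace ℝ (Fin N),
      (inner ℝ (g a) b : ℝ) = inner ℝ a (g b) := by
    intro a b
    rw [PiLp.inner_apply, PiLp.inner_apply]
    simp only [RCLike.inner_apply', starRingEnd_apply, star_trivial]
    have h1 : ∑ i, (g a) i * b i = (G *ᵥ (fun j => a j)) ⬝ᵥ (fun j => b j) :=
      Finset.sum_congr rfl fun i _ => by rw [hgv]
    have h2 : ∑ i, a i * (g b) i = (fun j => a j) ⬝ᵥ (G *ᵥ (fun j => b j)) :=
      Finset.sum_congr rfl fun i _ => by rw [hgv]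
    rw [h1, h2, Matrix.dotProduct_mulVec, ← Matrix.mulVec_transpose, hGs.eq]
  have hTsymm : T.IsSymmetric := by
    intro u v
    rw [Submodule.coe_inner, Submodule.coe_inner, LinearMap.restrict_coe_apply,
      LinearMap.restrict_coe_apply]
    exact hginner _ _
  have hrk : Module.finrank ℝ W = Module.finrank ℝ W := rfl
  set b := hTsymm.eigenvectorBasis hrk with hb
  set μ := hTsymm.eigenvalues hrk with hμ
  have hμlt : ∀ i, |μ i| < 1 := by
    intro i
    have hb0 : (b i : EuclideanSpace ℝ (Fin N)) ≠ 0 := by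
      simp only [ne_eq, Submodule.coe_eq_zero]
      exact b.toBasis.ne_zero i
    have happ : T (b i) = μ i • b i := by
      exact_mod_cast hTsymm.apply_eigenvectorBasis hrk i
    have hE : g (b i : EuclideanSpace ℝ (Fin N)) = μ i • (b i : EuclideanSpace ℝ (Fin N)) := by
      rw [← LinearMap.restrict_coe_apply g hWinv, ← hT, happ]; rfl
    have hmul : G *ᵥ (fun j => (b i : EuclideanSpace ℝ (Fin N)) j)
        = μ i • (fun j => (b i : EuclideanSpace ℝ (Fin N)) j) := by
      funext k
      rw [← hgv, hE]
      rfl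
    refine heig (μ i) _ ?_ ((memW _).mp (b i).2) hmul
    intro hc
    exact hb0 (WithLp.ofLp_injective 2 (funext fun k => congrFun hc k))
  set ρ : NNReal := Finset.univ.sup (fun i => ‖μ i‖₊) with hρ
  have hρ1 : (ρ : ℝ) < 1 := by
    have : Finset.univ.sup (fun i => ‖μ i‖₊) < 1 := by
      apply Finset.sup_lt_iff (by norm_num : (⊥ : NNReal) < 1) |>.mpr
      intro i _
      rw [← NNReal.coe_lt_coe]
      simpa [Real.norm_eq_abs] using hμlt i
    rw [hρ]
    exact_mod_cast this
  have hρle : ∀ i, |μ i| ≤ (ρ : ℝ) := by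
    intro i
    have := Finset.le_sup (f := fun i => ‖μ i‖₊) (Finset.mem_univ i)
    rw [← NNReal.coe_le_coe] at this
    simpa [Real.norm_eq_abs] using this
  refine ⟨ρ, ρ.coe_nonneg, hρ1, ?_⟩
  intro v hv
  set x : W := ⟨v, (memW v).mpr hv⟩ with hx
  have hsq : ‖T x‖^2 ≤ (ρ : ℝ)^2 * ‖x‖^2 := by
    rw [← b.repr.norm_map (T x), ← b.repr.norm_map x,
      PiLp.norm_sq_eq_of_L2, PiLp.norm_sq_eq_of_L2, Finset.mul_sum]
    apply Finset.sum_le_sum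
    intro i _
    have hrepr : b.repr (T x) i = μ i * b.repr x i :=
      hTsymm.eigenvectorBasis_apply_self_apply hrk x i
    rw [hrepr, Real.norm_eq_abs, Real.norm_eq_abs, abs_mul, mul_pow]
    exact mul_le_mul_of_nonneg_right (pow_le_pow_left₀ (abs_nonneg _) (hρle i) 2) (sq_nonneg _)
  have hgoal : ‖T x‖ ≤ (ρ : ℝ) * ‖x‖ := by
    have h := Real.sqrt_le_sqrt hsq
    rwa [Real.sqrt_sq (norm_nonneg _), Real.sqrt_mul (sq_nonneg _),
      Real.sqrt_sq ρ.coe_nonneg, Real.sqrt_sq (norm_nonneg _)] at h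
  have h1 : ‖T x‖ = ‖g v‖ := by
    rw [Submodule.coe_norm]
    congr 1
  have h2 : ‖x‖ = ‖v‖ := by rw [Submodule.coe_norm]
  rw [h1, h2] at hgoal
  exact hgoal

lemma seq_tendsto_zero (e c : ℕ → ℝ) (ρ : ℝ) (hρ0 : 0 ≤ ρ) (hρ1 : ρ < 1)
    (he0 : ∀ s, 0 ≤ e s)
    (hrec : ∀ s : ℕ, e (s + 1) ≤ ρ * e s + c (s + 1))
    (hc : Filter.Tendsto c Filter.atTop (nhds 0)) :
    Filter.Tendsto e Filter.atTop (nhds 0) := by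
  rw [Metric.tendsto_atTop]
  intro ε hε
  have hc' := Metric.tendsto_atTop.mp hc ((1 - ρ) * (ε/2)) (by nlinarith)
  obtain ⟨S₀, hS₀⟩ := hc'
  have key : ∀ k : ℕ, e (S₀ + k) ≤ ρ^k * e S₀ + ε/2 := by
    intro k
    induction k with
    | zero => simp; nlinarith [he0 S₀]
    | succ k ih =>
      have h1 := hrec (S₀ + k)
      have h2 : c (S₀ + k + 1) < (1 - ρ) * (ε/2) := by
        have := hS₀ (S₀ + k + 1) (by omega)
        rw [Real.dist_eq, sub_zero] at this
        exact lt_of_le_of_lt (le_abs_self _) this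
      have h3 : ρ * e (S₀ + k) ≤ ρ * (ρ^k * e S₀ + ε/2) :=
        mul_le_mul_of_nonneg_left ih hρ0
      have : e (S₀ + k + 1) ≤ ρ * (ρ^k * e S₀ + ε/2) + (1 - ρ) * (ε/2) := by linarith
      calc e (S₀ + (k+1)) = e (S₀ + k + 1) := by ring_nf
        _ ≤ ρ * (ρ^k * e S₀ + ε/2) + (1 - ρ) * (ε/2) := this
        _ = ρ^(k+1) * e S₀ + ε/2 := by ring
  have hpow : Filter.Tendsto (fun k => ρ^k * e S₀) Filter.atTop (nhds 0) := by
    have := tendsto_pow_atTop_nhds_zero_of_lt_one hρ0 hρ1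
    simpa using this.mul_const (e S₀)
  obtain ⟨K, hK⟩ := Metric.tendsto_atTop.mp hpow (ε/2) (by linarith)
  refine ⟨S₀ + K, fun s hs => ?_⟩
  have hsK : ∃ k, k ≥ K ∧ s = S₀ + k := ⟨s - S₀, by omega, by omega⟩
  obtain ⟨k, hkK, rfl⟩ := hsK
  have h1 := key k
  have h2 := hK k hkK
  rw [Real.dist_eq, sub_zero] at h2 ⊢
  have h3 : ρ^k * e S₀ < ε/2 := lt_of_le_of_lt (le_abs_self _) h2
  rw [abs_of_nonneg (he0 _)]
  linarith

open scoped Kronecker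

lemma kron_apply {N m : ℕ} (G : Matrix (Fin N) (Fin N) ℝ) (z : Fin N × Fin m → ℝ)
    (i : Fin N) (a : Fin m) :
    ((G ⊗ₖ (1 : Matrix (Fin m) (Fin m) ℝ)) *ᵥ z) (i, a) = ∑ j, G i j * z (j, a) := by
  simp [Matrix.mulVec, dotProduct, Fintype.sum_prod_type, Matrix.one_apply,
    mul_ite, ite_mul, mul_one, zero_mul, mul_zero, Finset.sum_ite_eq, mul_assoc]

/-- under the hypotheses of the consensus iteration
x_s = (G ⊗ I_m) x_{s−1} + δ_s w_s (connected graph, κ > λ_N/2, δ_s ∈ (0,1), δ_s → 0,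
(w_s) bounded), for every ε > 0 there is S such that for all s > S and all agents i, j,
the blocks satisfy ‖x_{i,s} − x_{j,s}‖ < ε. -/
theorem stmt8 {N m : ℕ} (hN : 0 < N) (L A : Matrix (Fin N) (Fin N) ℝ)
    (hL : IsLaplacianOf L A) (hconn : GraphConnected A)
    (lamN : ℝ)
    (hlamN : Module.End.HasEigenvalue (Matrix.toLin' L) lamN)
    (hmax : ∀ μ : ℝ, Module.End.HasEigenvalue (Matrix.toLin' L) μ → μ ≤ lamN)
    (κ : ℝ) (hκ : lamN / 2 < κ)
    (G : Matrix (Fin N) (Fin N) ℝ) (hG : G = 1 - κ⁻¹ • L)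
    (δ : ℕ → ℝ) (hδ : ∀ s : ℕ, 1 ≤ s → 0 < δ s ∧ δ s < 1)
    (hδ0 : Filter.Tendsto δ Filter.atTop (nhds 0))
    (w : ℕ → (Fin N × Fin m → ℝ)) (B : ℝ) (hw : ∀ s : ℕ, ‖w s‖ ≤ B)
    (x : ℕ → (Fin N × Fin m → ℝ))
    (hx : ∀ s : ℕ, 1 ≤ s →
      x s = (G ⊗ₖ (1 : Matrix (Fin m) (Fin m) ℝ)) *ᵥ x (s - 1) + δ s • w s) :
    ∀ ε : ℝ, 0 < ε → ∃ S : ℕ, ∀ s : ℕ, S < s → ∀ i j : Fin N,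
      ‖(fun a => x s (i, a)) - (fun a => x s (j, a))‖ < ε := by
  classical
  intro ε hε
  have hB0 : 0 ≤ B := le_trans (norm_nonneg _) (hw 0)
  -- basic facts about G
  have hGsymm : G.IsSymm := by
    rw [hG, Matrix.IsSymm, Matrix.transpose_sub, Matrix.transpose_smul,
      (lap_symm L A hL).eq, Matrix.transpose_one]
  have hGrow : ∀ i, ∑ j, G i j = 1 := by
    intro i
    rw [hG]
    simp only [Matrix.sub_apply, Matrix.smul_apply, Matrix.one_apply, smul_eq_mul,
      Finset.sum_sub_distrib, ← Finset.mul_sum, lap_row_sum L A hL i, mul_zero, sub_zero]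
    simp
  have hGcol : ∀ j, ∑ i, G i j = 1 := by
    intro j
    rw [hG]
    simp only [Matrix.sub_apply, Matrix.smul_apply, Matrix.one_apply, smul_eq_mul,
      Finset.sum_sub_distrib, ← Finset.mul_sum, lap_col_sum L A hL j, mul_zero, sub_zero]
    simp [eq_comm]
  have hGW : ∀ v : Fin N → ℝ, ∑ i, v i = 0 → ∑ i, (G *ᵥ v) i = 0 := by
    intro v hv
    simp only [Matrix.mulVec, dotProduct]
    rw [Finset.sum_comm]
    have : ∀ j, ∑ i, G i j * v j = v j := by
      intro j
      rw [← Finset.sum_mul, hGcol, one_mul]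
    rw [Finset.sum_congr rfl fun j _ => this j]
    exact hv
  obtain ⟨ρ, hρ0, hρ1, hρ⟩ := contract G hGsymm hGW
    (fun μ v hv hsum hμ => eig_bound hN L A hL hconn lamN hlamN hmax κ hκ G hG μ v hv hsum hμ)
  -- the averaging / disagreement operator
  set P : (Fin N → ℝ) → (Fin N → ℝ) := fun v i => v i - (∑ j, v j) / N with hP
  have hPsum : ∀ v, ∑ i, P v i = 0 := by
    intro v
    simp only [hP, Finset.sum_sub_distrib, Finset.sum_const, Finset.card_univ,
      Fintype.card_fin, nsmul_eq_mul]
    have : (N : ℝ) ≠ 0 := (Nat.cast_pos.mpr hN).ne'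
    field_simp
    ring
  have hPadd : ∀ u v, P (u + v) = P u + P v := by
    intro u v; funext i
    simp only [hP, Pi.add_apply, Finset.sum_add_distrib]
    ring
  have hPsmul : ∀ (c : ℝ) u, P (c • u) = c • P u := by
    intro c u; funext i
    simp only [hP, Pi.smul_apply, smul_eq_mul, ← Finset.mul_sum]
    ring
  have hGsum : ∀ v : Fin N → ℝ, ∑ k, (G *ᵥ v) k = ∑ j, v j := by
    intro v
    simp only [Matrix.mulVec, dotProduct]
    rw [Finset.sum_comm]
    exact Finset.sum_congr rfl fun j _ => by rw [← Finset.sum_mul, hGcol, one_mul]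
  have hPG : ∀ v, P (G *ᵥ v) = G *ᵥ (P v) := by
    intro v
    funext i
    have hRHS : (G *ᵥ (P v)) i = (G *ᵥ v) i - (∑ j, v j) / N := by
      simp only [hP, Matrix.mulVec, dotProduct, mul_sub]
      rw [Finset.sum_sub_distrib]
      congr 1
      rw [← Finset.sum_mul, hGrow, one_mul]
    rw [hRHS]
    simp only [hP, hGsum]
  -- per-column dynamics
  set y : Fin m → ℕ → (Fin N → ℝ) := fun a s i => x s (i, a) with hy
  have hyrec : ∀ (a : Fin m) (s : ℕ),
      y a (s + 1) = G *ᵥ (y a s) + δ (s + 1) • (fun i => w (s + 1) (i, a)) := by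
    intro a s
    funext i
    have h := hx (s + 1) (by omega)
    have h2 : x (s + 1) (i, a)
        = ((G ⊗ₖ (1 : Matrix (Fin m) (Fin m) ℝ)) *ᵥ x s) (i, a) + δ (s+1) * w (s+1) (i, a) := by
      rw [h]
      simp
    rw [kron_apply] at h2
    simpa [hy, Matrix.mulVec, dotProduct] using h2
  -- disagreement vectors in Euclidean space
  set d : Fin m → ℕ → EuclideanSpace ℝ (Fin N) :=
    fun a s => (WithLp.equiv 2 (Fin N → ℝ)).symm (P (y a s)) with hd
  have hdapp : ∀ a s i, d a s i = P (y a s) i := fun a s i => rfl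
  have hdsum : ∀ a s, ∑ i, d a s i = 0 := by
    intro a s
    rw [Finset.sum_congr rfl fun i _ => hdapp a s i]
    exact hPsum _
  have hdrec : ∀ (a : Fin m) (s : ℕ),
      d a (s + 1) = Matrix.toEuclideanLin G (d a s)
        + δ (s + 1) • (WithLp.equiv 2 (Fin N → ℝ)).symm (P (fun i => w (s+1) (i, a))) := by
    intro a s
    have hfun : P (y a (s + 1))
        = G *ᵥ (P (y a s)) + δ (s + 1) • P (fun i => w (s+1) (i, a)) := by
      rw [hyrec a s, hPadd, hPsmul, hPG]
    rw [hd]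
    simp only [hfun, WithLp.equiv_symm_apply, WithLp.toLp_add, WithLp.toLp_smul]
    congr 1
    all_goals rw [Matrix.toEuclideanLin_toLp, Matrix.toLin'_apply]
  -- uniform bound on the forcing terms
  set C : ℝ := Real.sqrt (N * (2 * B)^2) with hC
  have hC0 : 0 ≤ C := Real.sqrt_nonneg _
  have hCbound : ∀ (a : Fin m) (s : ℕ),
      ‖(WithLp.equiv 2 (Fin N → ℝ)).symm (P (fun i => w s (i, a)))‖ ≤ C := by
    intro a s
    have hwB : ∀ i : Fin N, |w s (i, a)| ≤ B := by
      intro i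
      have := norm_le_pi_norm (w s) (i, a)
      rw [Real.norm_eq_abs] at this
      exact this.trans (hw s)
    have hsumB : |∑ j, w s (j, a)| ≤ (N : ℝ) * B := by
      refine (Finset.abs_sum_le_sum_abs _ _).trans ?_
      have := Finset.sum_le_card_nsmul Finset.univ (fun j => |w s (j, a)|) B
        (fun j _ => hwB j)
      simpa [Finset.card_univ, nsmul_eq_mul] using this
    have hPB : ∀ i : Fin N, |P (fun i => w s (i, a)) i| ≤ 2 * B := by
      intro i
      have h1 : |(∑ j, w s (j, a)) / N| ≤ B := by
        rw [abs_div, abs_of_nonneg (by positivity : (0:ℝ) ≤ (N:ℝ))]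
        rw [div_le_iff₀ (by positivity : (0:ℝ) < (N:ℝ))]
        calc |∑ j, w s (j, a)| ≤ (N : ℝ) * B := hsumB
          _ = B * N := by ring
      calc |P (fun i => w s (i, a)) i|
          ≤ |w s (i, a)| + |(∑ j, w s (j, a)) / N| := abs_sub _ _
        _ ≤ B + B := add_le_add (hwB i) h1
        _ = 2 * B := by ring
    rw [EuclideanSpace.norm_eq, hC]
    apply Real.sqrt_le_sqrt
    have hterm : ∀ i : Fin N,
        ‖((WithLp.equiv 2 (Fin N → ℝ)).symm (P (fun i => w s (i, a)))) i‖ ^ 2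
          ≤ (2 * B)^2 := by
      intro i
      rw [Real.norm_eq_abs]
      exact pow_le_pow_left₀ (abs_nonneg _) (hPB i) 2
    have hsum := Finset.sum_le_card_nsmul Finset.univ
      (fun i => ‖((WithLp.equiv 2 (Fin N → ℝ)).symm (P (fun i => w s (i, a)))) i‖ ^ 2)
      ((2*B)^2) (fun i _ => hterm i)
    simpa [Finset.card_univ, nsmul_eq_mul] using hsum
  -- the error sequence
  set e : Fin m → ℕ → ℝ := fun a s => ‖d a s‖ with he
  have hrec : ∀ (a : Fin m) (s : ℕ), e a (s + 1) ≤ ρ * e a s + δ (s+1) * C := by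
    intro a s
    rw [he]
    have hδpos := (hδ (s+1) (by omega)).1
    calc ‖d a (s+1)‖
        ≤ ‖Matrix.toEuclideanLin G (d a s)‖
          + ‖δ (s + 1) • (WithLp.equiv 2 (Fin N → ℝ)).symm (P (fun i => w (s+1) (i, a)))‖ := by
            rw [hdrec a s]; exact norm_add_le _ _
      _ ≤ ρ * ‖d a s‖ + δ (s+1) * C := by
          gcongr
          · exact hρ (d a s) (hdsum a s)
          · rw [norm_smul, Real.norm_eq_abs, abs_of_pos hδpos]
            exact mul_le_mul_of_nonneg_left (hCbound a (s+1)) hδpos.le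
  have hctend : Filter.Tendsto (fun s => δ s * C) Filter.atTop (nhds 0) := by
    simpa using hδ0.mul_const C
  have hetend : ∀ a : Fin m, Filter.Tendsto (e a) Filter.atTop (nhds 0) := by
    intro a
    exact seq_tendsto_zero (e a) (fun s => δ s * C) ρ hρ0 hρ1
      (fun s => norm_nonneg _) (hrec a) hctend
  -- pick thresholds
  have hch : ∀ a : Fin m, ∃ S : ℕ, ∀ s, S ≤ s → e a s < ε / 2 := by
    intro a
    obtain ⟨S, hS⟩ := Metric.tendsto_atTop.mp (hetend a) (ε/2) (by linarith)
    refine ⟨S, fun s hs => ?_⟩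
    have := hS s hs
    rw [Real.dist_eq, sub_zero] at this
    exact lt_of_le_of_lt (le_abs_self _) this
  choose Sf hSf using hch
  refine ⟨Finset.univ.sup Sf, fun s hs i j => ?_⟩
  have hcoord : ∀ (v : EuclideanSpace ℝ (Fin N)) (i : Fin N), |v i| ≤ ‖v‖ := by
    intro v i
    rw [EuclideanSpace.norm_eq, ← Real.sqrt_sq_eq_abs]
    apply Real.sqrt_le_sqrt
    have h := Finset.single_le_sum (f := fun k => ‖v k‖^2)
      (fun k _ => sq_nonneg _) (Finset.mem_univ i)
    simpa [Real.norm_eq_abs, sq_abs] using h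
  rw [pi_norm_lt_iff hε]
  intro a
  have hsa : Sf a ≤ s := le_trans (Finset.le_sup (Finset.mem_univ a)) hs.le
  have hea := hSf a s hsa
  have hdiff : x s (i, a) - x s (j, a) = d a s i - d a s j := by
    rw [hdapp, hdapp]
    simp only [hP, hy]
    ring
  rw [Pi.sub_apply, Real.norm_eq_abs, hdiff]
  calc |d a s i - d a s j| ≤ |d a s i| + |d a s j| := abs_sub _ _
    _ ≤ ‖d a s‖ + ‖d a s‖ := add_le_add (hcoord _ _) (hcoord _ _)
    _ = 2 * e a s := by rw [he]; ring
    _ < ε := by linarith
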